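/- A sofic shift X ⊆ Σ^ℤ has a synchronizing deterministic presentation if and only if for every word u ∈ B(X) there exists an intrinsically synchronizing word w for X such that u ∈ F_X(w). -/

import Mathlib

/-- A labeled graph over vertex type `V` and alphabet `A`, given by its
labeled-edge relation: `Edge p a q` means there is an edge labeled `a`
from `p` to `q`. -/
structure LabeledGraph (V A : Type) where
  Edge : V → A → V → Prop

namespace LabeledGraph

variable {V A : Type}

/-- `G.Walk p w q` : there is a (finite) path from `p` to `q` labeled `w`. -/
def Walk (G : LabeledGraph V A) : V → List A → V → Prop
  | p, [], q => p = q
  | p, a :: w, q => ∃ r, G.Edge p a r ∧ Walk G r w q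

/-- The follower set of a vertex: labels of finite paths starting at `q`. -/
def follower (G : LabeledGraph V A) (q : V) : Set (List A) :=
  { w | ∃ q', G.Walk q w q' }

/-- The transition action on sets of vertices: `S·w`. -/
def transSet (G : LabeledGraph V A) (S : Set V) (w : List A) : Set V :=
  { q' | ∃ q ∈ S, G.Walk q w q' }

/-- `G` is deterministic (right-resolving). -/
def Deterministic (G : LabeledGraph V A) : Prop :=
  ∀ p a q q', G.Edge p a q → G.Edge p a q' → q = q'

/-- `G` is essential: every vertex has an outgoing and an incoming edge. -/
def Essential (G : LabeledGraph V A) : Prop :=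
  ∀ q, (∃ a r, G.Edge q a r) ∧ (∃ a p, G.Edge p a q)

/-- The sofic shift presented by `G`: labels of bi-infinite paths. -/
def shift (G : LabeledGraph V A) : Set (ℤ → A) :=
  { x | ∃ v : ℤ → V, ∀ j : ℤ, G.Edge (v j) (x j) (v (j + 1)) }

/-- `w` is a synchronizing word for `G`: `Q_G · w` is a singleton. -/
def SyncWord (G : LabeledGraph V A) (w : List A) : Prop :=
  ∃ r, G.transSet Set.univ w = {r}

/-- A vertex `q` is synchronizing: some word synchronizes to `q`. -/
def SyncVertex (G : LabeledGraph V A) (q : V) : Prop :=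
  ∃ w, G.transSet Set.univ w = {q}

/-- `G` is synchronizing: every vertex is synchronizing. -/
def Synchronizing (G : LabeledGraph V A) : Prop :=
  ∀ q, G.SyncVertex q

/-- `G` is follower-separated. -/
def FollowerSeparated (G : LabeledGraph V A) : Prop :=
  ∀ p q, G.follower p = G.follower q → p = q

/-- `G` is irreducible (strongly connected). -/
def StronglyConnected (G : LabeledGraph V A) : Prop :=
  ∀ p q, ∃ w, G.Walk p w q

/-- `q` is reachable from `p`. -/
def Reachable (G : LabeledGraph V A) (p q : V) : Prop :=
  ∃ w, G.Walk p w q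

/-- `C` is an irreducible component: an equivalence class of mutual reachability. -/
def IsIrredComponent (G : LabeledGraph V A) (C : Set V) : Prop :=
  ∃ p, C = { q | G.Reachable p q ∧ G.Reachable q p }

/-- `C` is terminal: everything reachable from `C` lies in `C`. -/
def TerminalSet (G : LabeledGraph V A) (C : Set V) : Prop :=
  ∀ p ∈ C, ∀ q, G.Reachable p q → q ∈ C

/-- `C` is initial: everything that reaches `C` lies in `C`. -/
def InitialSet (G : LabeledGraph V A) (C : Set V) : Prop :=
  ∀ q ∈ C, ∀ p, G.Reachable p q → p ∈ C

/-- Subgraph induced by a set `P` of vertices. -/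
def induce (G : LabeledGraph V A) (P : Set V) : LabeledGraph P A where
  Edge := fun p a q => G.Edge p.1 a q.1

/-- The graph `Ĝ`: vertices are ordered pairs of distinct vertices of `G`,
with an edge labeled `a` from `(p₁,p₂)` to `(q₁,q₂)` iff `G` has edges labeled
`a` from `p₁` to `q₁` and from `p₂` to `q₂`. -/
def pairGraph (G : LabeledGraph V A) : LabeledGraph { pq : V × V // pq.1 ≠ pq.2 } A where
  Edge := fun x a y => G.Edge x.1.1 a y.1.1 ∧ G.Edge x.1.2 a y.1.2

end LabeledGraph

/-- The word `w` appears in the bi-infinite sequence `x`. -/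
def AppearsIn {A : Type} (w : List A) (x : ℤ → A) : Prop :=
  ∃ i : ℤ, ∀ n : Fin w.length, x (i + (n : ℕ)) = w.get n

/-- The language of a subset of the full shift: all finite words appearing
in some point of `X`. -/
def lang {A : Type} (X : Set (ℤ → A)) : Set (List A) :=
  { w | ∃ x ∈ X, AppearsIn w x }

/-- `X` is a shift space. -/
def IsShiftSpace {A : Type} (X : Set (ℤ → A)) : Prop :=
  ∃ F : Set (List A), X = { x | ∀ w ∈ F, ¬ AppearsIn w x }

/-- `X` is a shift of finite type. -/
def IsSFT {A : Type} (X : Set (ℤ → A)) : Prop :=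
  ∃ F : Set (List A), F.Finite ∧ X = { x | ∀ w ∈ F, ¬ AppearsIn w x }

/-- `w` is intrinsically synchronizing for `X`. -/
def IntrinsicallySync {A : Type} (X : Set (ℤ → A)) (w : List A) : Prop :=
  w ∈ lang X ∧ ∀ u v, u ++ w ∈ lang X → w ++ v ∈ lang X → u ++ (w ++ v) ∈ lang X

/-- `X` is an irreducible shift space. -/
def IrreducibleShift {A : Type} (X : Set (ℤ → A)) : Prop :=
  ∀ u ∈ lang X, ∀ v ∈ lang X, ∃ w, u ++ (w ++ v) ∈ lang X

/-- The follower set of a word `u` in `X`. -/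
def followerX {A : Type} (X : Set (ℤ → A)) (u : List A) : Set (List A) :=
  { w | u ++ w ∈ lang X }

/-- `X` is `M`-step: every word of `B(X)` of length at least `M` is
intrinsically synchronizing for `X`. -/
def MStep {A : Type} (X : Set (ℤ → A)) (M : ℕ) : Prop :=
  ∀ w ∈ lang X, M ≤ w.length → IntrinsicallySync X w

namespace StmtAux
variable {A : Type}

lemma appearsIn_iff {w : List A} {x : ℤ → A} :
    AppearsIn w x ↔ ∃ i : ℤ, ∀ k : ℕ, ∀ hk : k < w.length, x (i + k) = w[k] := by
  constructor
  · rintro ⟨i, h⟩; exact ⟨i, fun k hk => h ⟨k, hk⟩⟩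
  · rintro ⟨i, h⟩; exact ⟨i, fun n => h n.1 n.2⟩

lemma appears_prefix {u v : List A} {x : ℤ → A} (h : AppearsIn (u ++ v) x) :
    AppearsIn u x := by
  rw [appearsIn_iff] at h ⊢
  obtain ⟨i, h⟩ := h
  refine ⟨i, fun k hk => ?_⟩
  have hk' : k < (u ++ v).length := by simp; omega
  rw [h k hk', List.getElem_append_left hk]

lemma appears_suffix {u v : List A} {x : ℤ → A} (h : AppearsIn (u ++ v) x) :
    AppearsIn v x := by
  rw [appearsIn_iff] at h ⊢
  obtain ⟨i, h⟩ := h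
  refine ⟨i + u.length, fun k hk => ?_⟩
  have hk' : u.length + k < (u ++ v).length := by simp; omega
  have := h (u.length + k) hk'
  rw [List.getElem_append_right (by omega)] at this
  simp only [Nat.add_sub_cancel_left] at this
  rw [← this]
  congr 1
  push_cast
  ring

lemma lang_prefix {X : Set (ℤ → A)} {u v : List A} (h : u ++ v ∈ lang X) : u ∈ lang X := by
  obtain ⟨x, hx, ha⟩ := h; exact ⟨x, hx, appears_prefix ha⟩

lemma lang_suffix {X : Set (ℤ → A)} {u v : List A} (h : u ++ v ∈ lang X) : v ∈ lang X := by
  obtain ⟨x, hx, ha⟩ := h; exact ⟨x, hx, appears_suffix ha⟩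

lemma intsync_append_right {X : Set (ℤ → A)} {w v : List A}
    (hw : IntrinsicallySync X w) (hv : w ++ v ∈ lang X) :
    IntrinsicallySync X (w ++ v) := by
  refine ⟨hv, fun u₁ v₁ h1 h2 => ?_⟩
  have h1' : u₁ ++ w ∈ lang X := by
    rw [← List.append_assoc] at h1; exact lang_prefix h1
  have h2' : w ++ (v ++ v₁) ∈ lang X := by rwa [← List.append_assoc]
  have := hw.2 u₁ (v ++ v₁) h1' h2'
  simpa [List.append_assoc] using this

lemma intsync_append_left {X : Set (ℤ → A)} {w s : List A}
    (hw : IntrinsicallySync X w) (hv : s ++ w ∈ lang X) :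
    IntrinsicallySync X (s ++ w) := by
  refine ⟨hv, fun u₁ v₁ h1 h2 => ?_⟩
  have h1' : (u₁ ++ s) ++ w ∈ lang X := by rwa [List.append_assoc]
  have h2' : w ++ v₁ ∈ lang X := lang_suffix (by rwa [List.append_assoc] at h2)
  have := hw.2 (u₁ ++ s) v₁ h1' h2'
  simpa [List.append_assoc] using this

lemma followerX_snoc {X : Set (ℤ → A)} {w : List A} {a : A} :
    followerX X (w ++ [a]) = {v | a :: v ∈ followerX X w} := by
  ext v; simp [followerX, List.append_assoc]

lemma followerX_intsync_absorb {X : Set (ℤ → A)} {w s : List A}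
    (hw : IntrinsicallySync X w) (hs : s ++ w ∈ lang X) :
    followerX X (s ++ w) = followerX X w := by
  ext v
  constructor
  · intro h
    simp only [followerX, Set.mem_setOf_eq, List.append_assoc] at h ⊢
    exact lang_suffix h
  · intro h
    have := hw.2 s v hs h
    simpa [followerX, List.append_assoc] using this

end StmtAux

namespace StmtAux2
open LabeledGraph StmtAux
variable {A V : Type}

lemma walk_append {G : LabeledGraph V A} {p q r : V} {u v : List A}
    (h1 : G.Walk p u q) (h2 : G.Walk q v r) : G.Walk p (u ++ v) r := by
  induction u generalizing p with
  | nil => cases h1; exact h2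
  | cons a u ih =>
    obtain ⟨m, hm, hw⟩ := h1
    exact ⟨m, hm, ih hw⟩

lemma walk_append_decomp {G : LabeledGraph V A} {p r : V} {u v : List A}
    (h : G.Walk p (u ++ v) r) : ∃ q, G.Walk p u q ∧ G.Walk q v r := by
  induction u generalizing p with
  | nil => exact ⟨p, rfl, h⟩
  | cons a u ih =>
    obtain ⟨m, hm, hw⟩ := h
    obtain ⟨q, h1, h2⟩ := ih hw
    exact ⟨q, ⟨m, hm, h1⟩, h2⟩

/-- convert a segment of a bi-infinite path into a walk -/
lemma walk_of_seg {G : LabeledGraph V A} {x : ℤ → A} {v : ℤ → V}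
    (L : ℕ) (i : ℤ) (h : ∀ j : ℤ, i ≤ j → j < i + L → G.Edge (v j) (x j) (v (j + 1))) :
    G.Walk (v i) (List.ofFn fun k : Fin L => x (i + k)) (v (i + L)) := by
  induction L generalizing i with
  | zero => simpa [LabeledGraph.Walk] using rfl
  | succ L ih =>
    rw [List.ofFn_succ]
    refine ⟨v (i + 1), ?_, ?_⟩
    · simpa using h i le_rfl (by omega)
    · have := ih (i + 1) (fun j hj hj' => h j (by omega) (by omega))
      have e1 : (i + 1 + (L : ℤ)) = i + (L + 1 : ℕ) := by push_cast; ring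
      rw [e1] at this
      convert this using 2 with k
      · funext k; congr 1; simp [Fin.val_succ]; push_cast; ring
    
/-- convert a walk into a finite vertex sequence -/
lemma seg_of_walk {G : LabeledGraph V A} {p q : V} {w : List A}
    (h : G.Walk p w q) :
    ∃ f : ℕ → V, f 0 = p ∧ f w.length = q ∧
      ∀ k, ∀ hk : k < w.length, G.Edge (f k) w[k] (f (k + 1)) := by
  induction w generalizing p with
  | nil => exact ⟨fun _ => p, rfl, h.symm ▸ rfl, fun k hk => absurd hk (by simp)⟩
  | cons a w ih =>
    obtain ⟨r, hr, hw⟩ := h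
    obtain ⟨f, hf0, hfl, hfe⟩ := ih hw
    refine ⟨fun k => Nat.rec p (fun k _ => f k) k, rfl, hfl, ?_⟩
    intro k hk
    cases k with
    | zero => simpa [hf0] using hr
    | succ k => exact hfe k (by simpa using hk)

/-- a word appearing in a point of the shift is the label of a walk -/
lemma walk_of_lang {G : LabeledGraph V A} {w : List A}
    (h : w ∈ lang G.shift) : ∃ p q, G.Walk p w q := by
  obtain ⟨x, ⟨v, hv⟩, ha⟩ := h
  rw [appearsIn_iff] at ha
  obtain ⟨i, hi⟩ := ha
  refine ⟨v i, v (i + w.length), ?_⟩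
  have hw : w = List.ofFn fun k : Fin w.length => x (i + k) := by
    apply List.ext_getElem (by simp)
    intro k h1 h2
    simp [(hi k h1).symm]
  have := walk_of_seg (G := G) (x := x) (v := v) w.length i (fun j _ _ => hv j)
  rwa [← hw] at this

end StmtAux2
namespace StmtAux3
open LabeledGraph StmtAux StmtAux2
variable {A V : Type}

/-- compactness: if every finite window of x admits a partial path, x is in the shift -/
lemma mem_shift_of_partial [Finite V] (G : LabeledGraph V A) (x : ℤ → A)
    (h : ∀ m : ℕ, ∃ v : ℤ → V, ∀ j : ℤ, -(m : ℤ) ≤ j → j ≤ m → G.Edge (v j) (x j) (v (j + 1))) :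
    x ∈ G.shift := by
  letI : TopologicalSpace V := ⊥
  haveI : DiscreteTopology V := ⟨rfl⟩
  set C : ℕ → Set (ℤ → V) :=
    fun m => {v | ∀ j : ℤ, -(m : ℤ) ≤ j → j ≤ m → G.Edge (v j) (x j) (v (j + 1))} with hC
  have hsub : ∀ m, C (m + 1) ⊆ C m := by
    intro m v hv j h1 h2
    exact hv j (by push_cast; omega) (by push_cast; omega)
  have hne : ∀ m, (C m).Nonempty := h
  have hclosed : ∀ m, IsClosed (C m) := by
    intro m
    have : C m = ⋂ (j : ℤ), {v : ℤ → V | -(m : ℤ) ≤ j → j ≤ m → G.Edge (v j) (x j) (v (j + 1))} := by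
      ext v; simp [hC, Set.mem_iInter]
    rw [this]
    refine isClosed_iInter fun j => ?_
    have : {v : ℤ → V | -(m : ℤ) ≤ j → j ≤ m → G.Edge (v j) (x j) (v (j + 1))} =
        (fun v : ℤ → V => (v j, v (j + 1))) ⁻¹'
          {pq : V × V | -(m : ℤ) ≤ j → j ≤ m → G.Edge pq.1 (x j) pq.2} := rfl
    rw [this]
    exact IsClosed.preimage ((continuous_apply j).prodMk (continuous_apply (j + 1)))
      (isClosed_discrete _)
  have hcompact : IsCompact (C 0) := (hclosed 0).isCompact
  obtain ⟨v, hv⟩ := IsCompact.nonempty_iInter_of_sequence_nonempty_isCompact_isClosed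
    C hsub hne hcompact hclosed
  refine ⟨v, fun j => ?_⟩
  have := Set.mem_iInter.mp hv (j.natAbs + 1)
  exact this j (by omega) (by omega)

/-- The window word of x around [-m, m] -/
lemma window_mem_lang {X : Set (ℤ → A)} {x : ℤ → A} (hx : x ∈ X) (i : ℤ) (L : ℕ) :
    (List.ofFn fun k : Fin L => x (i + k)) ∈ lang X := by
  refine ⟨x, hx, ?_⟩
  rw [appearsIn_iff]
  refine ⟨i, fun k hk => ?_⟩
  simp at hk
  simp [hk]

/-- if the window word is in the language of a shift, there is a partial path -/
lemma partial_of_window {G : LabeledGraph V A} {x : ℤ → A} {i : ℤ} {L : ℕ}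
    (h : (List.ofFn fun k : Fin L => x (i + k)) ∈ lang G.shift) :
    ∃ v : ℤ → V, ∀ j : ℤ, i ≤ j → j < i + L → G.Edge (v j) (x j) (v (j + 1)) := by
  obtain ⟨y, ⟨u, hu⟩, ha⟩ := h
  rw [appearsIn_iff] at ha
  obtain ⟨i₀, hi₀⟩ := ha
  refine ⟨fun j => u (j - i + i₀), fun j hj hj' => ?_⟩
  have hk : (j - i).toNat < L := by omega
  have hkl : (j - i).toNat < (List.ofFn fun k : Fin L => x (i + k)).length := by simpa using hk
  have h1 := hi₀ (j - i).toNat hkl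
  have e : (((j - i).toNat : ℤ)) = j - i := Int.toNat_of_nonneg (by omega)
  rw [List.getElem_ofFn] at h1
  simp only [e] at h1
  have hy : y (i₀ + (j - i)) = x j := by rw [h1]; congr 1; omega
  have h3 := hu (i₀ + (j - i))
  rw [hy] at h3
  show G.Edge (u (j - i + i₀)) (x j) (u (j + 1 - i + i₀))
  convert h3 using 2 <;> ring

/-- essential graphs: every walk label extends to a point of the shift -/
lemma lang_of_walk_essential {G : LabeledGraph V A} (hess : G.Essential)
    {p q : V} {w : List A} (hw : G.Walk p w q) : w ∈ lang G.shift := by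
  classical
  have hfwd : ∀ r : V, ∃ ar : A × V, G.Edge r ar.1 ar.2 := by
    intro r; obtain ⟨a, r', h⟩ := (hess r).1; exact ⟨(a, r'), h⟩
  have hbwd : ∀ r : V, ∃ ar : A × V, G.Edge ar.2 ar.1 r := by
    intro r; obtain ⟨a, r', h⟩ := (hess r).2; exact ⟨(a, r'), h⟩
  choose nxt hnxt using hfwd
  choose prv hprv using hbwd
  obtain ⟨f, hf0, hfl, hfe⟩ := seg_of_walk hw
  let fwd : ℕ → V := fun k => Nat.rec q (fun _ r => (nxt r).2) k
  let bwd : ℕ → V := fun k => Nat.rec p (fun _ r => (prv r).2) k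
  have hfwds : ∀ k, fwd (k + 1) = (nxt (fwd k)).2 := fun k => rfl
  have hbwds : ∀ k, bwd (k + 1) = (prv (bwd k)).2 := fun k => rfl
  let v : ℤ → V := fun j =>
    if j < 0 then bwd (-j).toNat
    else if j ≤ (w.length : ℤ) then f j.toNat
    else fwd (j - w.length).toNat
  let y : ℤ → A := fun j =>
    if h0 : j < 0 then (prv (bwd (-(j + 1)).toNat)).1
    else if h : j < (w.length : ℤ) then w[j.toNat]'(by omega)
    else (nxt (fwd (j - w.length).toNat)).1
  have hv_le : ∀ j : ℤ, j ≤ 0 → v j = bwd (-j).toNat := by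
    intro j hj
    rcases lt_or_eq_of_le hj with hj' | hj'
    · simp only [v]; rw [if_pos hj']
    · subst hj'
      simp only [v]
      rw [if_neg (by omega), if_pos (by omega)]
      show f (Int.toNat 0) = bwd (Int.toNat (-0))
      exact hf0
  have hv_mid : ∀ j : ℤ, 0 ≤ j → j ≤ (w.length : ℤ) → v j = f j.toNat := by
    intro j h1 h2
    simp only [v]
    rw [if_neg (by omega), if_pos h2]
  have hv_hi : ∀ j : ℤ, (w.length : ℤ) ≤ j → v j = fwd (j - w.length).toNat := by
    intro j hj
    rcases lt_or_eq_of_le hj with hj' | hj'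
    · simp only [v]; rw [if_neg (by omega), if_neg (by omega)]
    · simp only [v]
      rw [if_neg (by omega), if_pos (by omega)]
      have h0 : (j - (w.length:ℤ)).toNat = 0 := by omega
      have h1 : j.toNat = w.length := by omega
      rw [h0, h1, hfl]
      rfl
  refine ⟨y, ⟨v, ?_⟩, ?_⟩
  · intro j
    rcases lt_trichotomy j 0 with hj | hj | hj
    · have hy : y j = (prv (bwd (-(j + 1)).toNat)).1 := by
        simp only [y]; rw [dif_pos hj]
      have he : (-j).toNat = (-(j + 1)).toNat + 1 := by omega
      rw [hv_le j (by omega), hv_le (j+1) (by omega), hy, he, hbwds]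
      exact hprv _
    · subst hj
      by_cases h1 : (0:ℤ) < (w.length : ℤ)
      · have hy : y 0 = w[(0:ℤ).toNat]'(by omega) := by
          simp only [y]; rw [dif_neg (by omega), dif_pos h1]
        rw [hv_mid 0 le_rfl (by omega), hv_mid (0+1) (by omega) (by omega), hy]
        have : ((0:ℤ)+1).toNat = (0:ℤ).toNat + 1 := by omega
        rw [this]
        exact hfe _ (by omega)
      · have hwl : (w.length : ℤ) = 0 := by omega
        have hy : y 0 = (nxt (fwd ((0:ℤ) - w.length).toNat)).1 := by
          simp only [y]; rw [dif_neg (by omega), dif_neg (by omega)]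
        rw [hv_hi 0 (by omega), hv_hi (0+1) (by omega), hy]
        have : ((0:ℤ)+1 - w.length).toNat = ((0:ℤ) - w.length).toNat + 1 := by omega
        rw [this, hfwds]
        exact hnxt _
    · rcases lt_or_ge j (w.length : ℤ) with h1 | h1
      · have hy : y j = w[j.toNat]'(by omega) := by
          simp only [y]; rw [dif_neg (by omega), dif_pos h1]
        rw [hv_mid j (by omega) (by omega), hv_mid (j+1) (by omega) (by omega), hy]
        have : (j+1).toNat = j.toNat + 1 := by omega
        rw [this]
        exact hfe _ (by omega)
      · have hy : y j = (nxt (fwd (j - w.length).toNat)).1 := by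
          simp only [y]; rw [dif_neg (by omega), dif_neg (by omega)]
        rw [hv_hi j h1, hv_hi (j+1) (by omega), hy]
        have : (j+1 - w.length).toNat = (j - w.length).toNat + 1 := by omega
        rw [this, hfwds]
        exact hnxt _
  · rw [appearsIn_iff]
    refine ⟨0, fun k hk => ?_⟩
    simp only [y]
    rw [dif_neg (by omega), dif_pos (by push_cast; omega)]
    congr 1
    omega

end StmtAux3
namespace StmtAux4
open LabeledGraph StmtAux StmtAux2 StmtAux3
variable {A V : Type}

/-- `w` is realized in a bi-infinite path from `p` to `q`. -/
def Real (G : LabeledGraph V A) (p : V) (w : List A) (q : V) : Prop :=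
  ∃ (y : ℤ → A) (u : ℤ → V), (∀ j : ℤ, G.Edge (u j) (y j) (u (j + 1))) ∧
    ∃ i : ℤ, (∀ k : ℕ, ∀ hk : k < w.length, y (i + k) = w[k]) ∧
      u i = p ∧ u (i + w.length) = q

lemma real_lang {G : LabeledGraph V A} {p q : V} {w : List A}
    (h : Real G p w q) : w ∈ lang G.shift := by
  obtain ⟨y, u, hu, i, hi, -, -⟩ := h
  exact ⟨y, ⟨u, hu⟩, appearsIn_iff.mpr ⟨i, hi⟩⟩

lemma lang_real {G : LabeledGraph V A} {w : List A}
    (h : w ∈ lang G.shift) : ∃ p q, Real G p w q := by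
  obtain ⟨x, ⟨v, hv⟩, ha⟩ := h
  rw [appearsIn_iff] at ha
  obtain ⟨i, hi⟩ := ha
  exact ⟨v i, v (i + w.length), x, v, hv, i, hi, rfl, rfl⟩

lemma real_decomp {G : LabeledGraph V A} {p q : V} {u v : List A}
    (h : Real G p (u ++ v) q) : ∃ m, Real G p u m ∧ Real G m v q := by
  obtain ⟨y, vp, hvp, i, hi, hs, he⟩ := h
  refine ⟨vp (i + u.length), ⟨y, vp, hvp, i, ?_, hs, rfl⟩,
    ⟨y, vp, hvp, i + u.length, ?_, rfl, ?_⟩⟩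
  · intro k hk
    have := hi k (by simp; omega)
    rwa [List.getElem_append_left hk] at this
  · intro k hk
    have := hi (u.length + k) (by simp; omega)
    rw [List.getElem_append_right (by omega)] at this
    simp only [Nat.add_sub_cancel_left] at this
    rw [← this]
    congr 1
    push_cast
    ring
  · rw [← he]
    congr 1
    simp
    ring
  
lemma real_splice {G : LabeledGraph V A} {p q q' : V} {w v : List A}
    (h1 : Real G p w q) (h2 : Real G q v q') : Real G p (w ++ v) q' := by
  obtain ⟨y₁, u₁, hu₁, i₁, hi₁, hs₁, he₁⟩ := h1
  obtain ⟨y₂, u₂, hu₂, i₂, hi₂, hs₂, he₂⟩ := h2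
  set T : ℤ := i₁ + w.length with hT
  set y₃ : ℤ → A := fun j => if j < T then y₁ j else y₂ (j - T + i₂) with hy₃
  set u₃ : ℤ → V := fun j => if j ≤ T then u₁ j else u₂ (j - T + i₂) with hu₃def
  have hqq : u₁ T = u₂ i₂ := by rw [he₁, hs₂]
  have hu3lo : ∀ j : ℤ, j ≤ T → u₃ j = u₁ j := fun j hj => by
    simp only [u₃]; rw [if_pos hj]
  have hu3hi : ∀ j : ℤ, T ≤ j → u₃ j = u₂ (j - T + i₂) := by
    intro j hj
    rcases lt_or_eq_of_le hj with hj' | hj'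
    · simp only [u₃]; rw [if_neg (by omega)]
    · simp only [u₃]
      rw [if_pos (by omega), ← hj']
      rw [hqq]
      congr 1
      omega
  refine ⟨y₃, u₃, ?_, i₁, ?_, ?_, ?_⟩
  · intro j
    rcases lt_or_ge j T with hj | hj
    · have hy : y₃ j = y₁ j := by simp only [y₃]; rw [if_pos hj]
      rw [hy, hu3lo j (by omega), hu3lo (j+1) (by omega)]
      exact hu₁ j
    · have hy : y₃ j = y₂ (j - T + i₂) := by simp only [y₃]; rw [if_neg (by omega)]
      rw [hy, hu3hi j hj, hu3hi (j+1) (by omega)]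
      have := hu₂ (j - T + i₂)
      rw [show j - T + i₂ + 1 = j + 1 - T + i₂ by ring] at this
      exact this
  · intro k hk
    simp only [List.length_append] at hk
    rcases lt_or_ge k w.length with hk' | hk'
    · have hlt : i₁ + (k : ℤ) < T := by omega
      have hy : y₃ (i₁ + k) = y₁ (i₁ + k) := by simp only [y₃]; rw [if_pos hlt]
      rw [hy, hi₁ k hk', List.getElem_append_left hk']
    · have hge : ¬ (i₁ + (k : ℤ) < T) := by omega
      have hy : y₃ (i₁ + k) = y₂ (i₁ + k - T + i₂) := by simp only [y₃]; rw [if_neg hge]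
      rw [hy]
      have he : i₁ + (k:ℤ) - T + i₂ = i₂ + (k - w.length : ℕ) := by
        have : ((k - w.length : ℕ) : ℤ) = (k:ℤ) - w.length := by omega
        rw [this]; omega
      rw [he, hi₂ _ (by omega), List.getElem_append_right hk']
  · rw [hu3lo i₁ (by omega), hs₁]
  · have hTle : T ≤ i₁ + ((w ++ v).length : ℤ) := by simp; omega
    rw [hu3hi _ hTle, ← he₂]
    congr 1
    simp
    ring

def Eset (G : LabeledGraph V A) (w : List A) : Set V := {q | ∃ p, Real G p w q}

def PastFut (G : LabeledGraph V A) (S : Set V) : Set (List A) :=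
  {v | ∃ q ∈ S, ∃ q', Real G q v q'}

lemma followerX_eq_pastFut (G : LabeledGraph V A) (w : List A) :
    followerX G.shift w = PastFut G (Eset G w) := by
  ext v
  constructor
  · intro h
    obtain ⟨p, q, hr⟩ := lang_real h
    obtain ⟨m, h1, h2⟩ := real_decomp hr
    exact ⟨m, ⟨p, h1⟩, q, h2⟩
  · rintro ⟨m, ⟨p, h1⟩, q', h2⟩
    exact real_lang (real_splice h1 h2)

end StmtAux4
namespace StmtAux5
open LabeledGraph StmtAux StmtAux2 StmtAux3 StmtAux4
variable {A V V' : Type}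

/-- vertex type of the synchronizing presentation -/
def VH (G : LabeledGraph V A) : Type :=
  {S : Set (List A) // ∃ w, IntrinsicallySync G.shift w ∧ S = followerX G.shift w}

noncomputable instance VH.instFintype [Fintype V] (G : LabeledGraph V A) :
    Fintype (VH G) := by
  classical
  refine Fintype.ofInjective (fun S : VH G => Eset G S.2.choose) ?_
  intro S₁ S₂ h
  simp only at h
  apply Subtype.ext
  have e1 : S₁.1 = PastFut G (Eset G S₁.2.choose) :=
    (S₁.2.choose_spec.2).trans (followerX_eq_pastFut G _)
  have e2 : S₂.1 = PastFut G (Eset G S₂.2.choose) :=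
    (S₂.2.choose_spec.2).trans (followerX_eq_pastFut G _)
  rw [e1, e2, h]

/-- the synchronizing presentation -/
def HG (G : LabeledGraph V A) : LabeledGraph (VH G) A where
  Edge S a S' := ∃ w, IntrinsicallySync G.shift w ∧ S.1 = followerX G.shift w ∧
    w ++ [a] ∈ lang G.shift ∧ S'.1 = followerX G.shift (w ++ [a])

lemma HG_det (G : LabeledGraph V A) : (HG G).Deterministic := by
  rintro S a S' S'' ⟨w, hw, hS, hwa, hS'⟩ ⟨t, ht, hS2, hta, hS''⟩
  apply Subtype.ext
  rw [hS', hS'', followerX_snoc, followerX_snoc, ← hS, ← hS2]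

lemma walk_HG_exists (G : LabeledGraph V A) {w v : List A}
    (hw : IntrinsicallySync G.shift w) (hv : w ++ v ∈ lang G.shift)
    (S : VH G) (hS : S.1 = followerX G.shift w) :
    ∃ S', (HG G).Walk S v S' ∧ S'.1 = followerX G.shift (w ++ v) := by
  induction v generalizing w S with
  | nil => exact ⟨S, rfl, by simpa using hS⟩
  | cons a v ih =>
    have hwa : w ++ [a] ∈ lang G.shift := by
      have : (w ++ [a]) ++ v ∈ lang G.shift := by simpa [List.append_assoc] using hv
      exact lang_prefix this
    have hwa' : IntrinsicallySync G.shift (w ++ [a]) := intsync_append_right hw hwa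
    set T : VH G := ⟨followerX G.shift (w ++ [a]), w ++ [a], hwa', rfl⟩ with hT
    obtain ⟨S', hwalk, hS'⟩ := ih hwa' (by simpa [List.append_assoc] using hv) T rfl
    refine ⟨S', ⟨T, ⟨w, hw, hS, hwa, rfl⟩, hwalk⟩, ?_⟩
    rw [hS']
    simp [List.append_assoc]

lemma walk_HG_char (G : LabeledGraph V A) {v : List A} {S S' : VH G}
    (hwalk : (HG G).Walk S v S') {w : List A}
    (hw : IntrinsicallySync G.shift w) (hS : S.1 = followerX G.shift w) :
    w ++ v ∈ lang G.shift ∧ S'.1 = followerX G.shift (w ++ v) := by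
  induction v generalizing S w with
  | nil =>
    cases hwalk
    exact ⟨by simpa using hw.1, by simpa using hS⟩
  | cons a v ih =>
    obtain ⟨T, ⟨t, ht, hSt, hta, hT⟩, hwalk'⟩ := hwalk
    have hFwt : followerX G.shift w = followerX G.shift t := by rw [← hS, hSt]
    have hwa : w ++ [a] ∈ lang G.shift := by
      have : [a] ∈ followerX G.shift t := hta
      rw [← hFwt] at this
      exact this
    have hwa' : IntrinsicallySync G.shift (w ++ [a]) := intsync_append_right hw hwa
    have hTw : T.1 = followerX G.shift (w ++ [a]) := by
      rw [hT, followerX_snoc, followerX_snoc, hFwt]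
    obtain ⟨h1, h2⟩ := ih hwalk' hwa' hTw
    constructor
    · rwa [List.append_assoc] at h1
    · rw [h2]; simp [List.append_assoc]

lemma lang_extend_right {X : Set (ℤ → A)} {w : List A} (h : w ∈ lang X) :
    ∃ a, w ++ [a] ∈ lang X := by
  obtain ⟨x, hx, ha⟩ := h
  rw [appearsIn_iff] at ha
  obtain ⟨i, hi⟩ := ha
  refine ⟨x (i + w.length), x, hx, appearsIn_iff.mpr ⟨i, fun k hk => ?_⟩⟩
  simp only [List.length_append, List.length_singleton] at hk
  rcases lt_or_ge k w.length with hk' | hk'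
  · rw [List.getElem_append_left hk']
    exact hi k hk'
  · have hkw : k = w.length := by omega
    subst hkw
    rw [List.getElem_append_right (le_refl _)]
    simp

section withHyp
variable (G : LabeledGraph V A)
  (hR : ∀ u ∈ lang G.shift, ∃ w, IntrinsicallySync G.shift w ∧ u ∈ followerX G.shift w)

include hR

lemma HG_essential : (HG G).Essential := by
  intro S
  obtain ⟨w, hw, hSw⟩ := S.2
  constructor
  · obtain ⟨a, ha⟩ := lang_extend_right hw.1
    have hwa' : IntrinsicallySync G.shift (w ++ [a]) := intsync_append_right hw ha
    exact ⟨a, ⟨followerX G.shift (w ++ [a]), w ++ [a], hwa', rfl⟩, w, hw, hSw, ha, rfl⟩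
  · obtain ⟨s, hs, hsw⟩ := hR w hw.1
    have hsw' : s ++ w ∈ lang G.shift := hsw
    rcases List.eq_nil_or_concat w with hnil | ⟨w', b, hconcat⟩
    · subst hnil
      obtain ⟨a, ha⟩ := lang_extend_right hw.1
      simp only [List.nil_append] at ha
      refine ⟨a, S, [], hw, hSw, by simpa using ha, ?_⟩
      rw [hSw]
      have := followerX_intsync_absorb (s := [a]) hw (by simpa using ha)
      simpa using this.symm
    · rw [List.concat_eq_append] at hconcat
      subst hconcat
      have hsw'' : (s ++ w') ++ [b] ∈ lang G.shift := by
        rwa [List.append_assoc]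
      have htsync : IntrinsicallySync G.shift (s ++ w') :=
        intsync_append_right hs (lang_prefix hsw'')
      refine ⟨b, ⟨followerX G.shift (s ++ w'), s ++ w', htsync, rfl⟩,
        s ++ w', htsync, rfl, hsw'', ?_⟩
      rw [hSw, List.append_assoc]
      exact (followerX_intsync_absorb hw hsw').symm

lemma HG_sync : (HG G).Synchronizing := by
  intro S
  obtain ⟨w, hw, hSw⟩ := S.2
  refine ⟨w, ?_⟩
  have hmem : S ∈ (HG G).transSet Set.univ w := by
    obtain ⟨s, hs, hsw⟩ := hR w hw.1
    have hsw' : s ++ w ∈ lang G.shift := hsw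
    obtain ⟨S'', hwalk, hS''⟩ :=
      walk_HG_exists G hs hsw' ⟨followerX G.shift s, s, hs, rfl⟩ rfl
    have hSS : S'' = S := by
      apply Subtype.ext
      rw [hS'', hSw]
      exact followerX_intsync_absorb hw hsw'
    exact ⟨_, trivial, hSS ▸ hwalk⟩
  ext S'
  simp only [transSet, Set.mem_setOf_eq, Set.mem_singleton_iff]
  constructor
  · rintro ⟨T, -, hwalk⟩
    obtain ⟨t, ht, hTt⟩ := T.2
    obtain ⟨h1, h2⟩ := walk_HG_char G hwalk ht hTt
    apply Subtype.ext
    rw [h2, hSw]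
    exact followerX_intsync_absorb hw h1
  · rintro rfl
    exact hmem

lemma HG_shift [Fintype V] : (HG G).shift = G.shift := by
  haveI : Finite (VH G) := Finite.of_fintype _
  ext x
  constructor
  · rintro ⟨v, hv⟩
    apply mem_shift_of_partial
    intro m
    -- the window word is in lang G.shift
    have hwalk := walk_of_seg (G := HG G) (x := x) (v := v)
      (2 * m + 1) (-(m:ℤ)) (fun j _ _ => hv j)
    obtain ⟨t, ht, hvt⟩ := (v (-(m:ℤ))).2
    obtain ⟨h1, -⟩ := walk_HG_char G hwalk ht hvt
    have hW : (List.ofFn fun k : Fin (2 * m + 1) => x (-(m:ℤ) + k)) ∈ lang G.shift :=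
      lang_suffix h1
    obtain ⟨vG, hvG⟩ := partial_of_window hW
    exact ⟨vG, fun j hj hj' => hvG j (by omega) (by push_cast; omega)⟩
  · intro hx
    apply mem_shift_of_partial
    intro m
    have hW : (List.ofFn fun k : Fin (2 * m + 1) => x (-(m:ℤ) + k)) ∈ lang G.shift :=
      window_mem_lang hx _ _
    obtain ⟨s, hs, hsW⟩ := hR _ hW
    obtain ⟨S', hwalk, -⟩ := walk_HG_exists G hs hsW ⟨followerX G.shift s, s, hs, rfl⟩ rfl
    obtain ⟨f, hf0, hfl, hfe⟩ := seg_of_walk hwalk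
    refine ⟨fun j => f (j + m).toNat, fun j hj hj' => ?_⟩
    have hk : (j + m).toNat < (List.ofFn fun k : Fin (2 * m + 1) => x (-(m:ℤ) + k)).length := by
      simp; omega
    have := hfe (j + m).toNat hk
    rw [List.getElem_ofFn] at this
    have e1 : -(m:ℤ) + ((j + m).toNat : ℤ) = j := by omega
    rw [e1] at this
    have e2 : (j + 1 + (m:ℤ)).toNat = (j + (m:ℤ)).toNat + 1 := by omega
    show (HG G).Edge (f (j + (m:ℤ)).toNat) (x j) (f (j + 1 + (m:ℤ)).toNat)
    rw [e2]
    exact this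

end withHyp

/-- transport a labeled graph along an equivalence of vertex types -/
def mapEquiv (G : LabeledGraph V A) (e : V ≃ V') : LabeledGraph V' A where
  Edge p a q := G.Edge (e.symm p) a (e.symm q)

lemma mapEquiv_walk (G : LabeledGraph V A) (e : V ≃ V') {w : List A} {p q : V'} :
    (mapEquiv G e).Walk p w q ↔ G.Walk (e.symm p) w (e.symm q) := by
  induction w generalizing p with
  | nil =>
    constructor
    · rintro rfl; rfl
    · intro h; exact e.symm.injective h
  | cons a w ih =>
    constructor
    · rintro ⟨r, hr, hwalk⟩
      exact ⟨e.symm r, hr, (ih).mp hwalk⟩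
    · rintro ⟨r, hr, hwalk⟩
      refine ⟨e r, by simpa [mapEquiv] using hr, ?_⟩
      rw [ih]
      simpa using hwalk

lemma mapEquiv_det (G : LabeledGraph V A) (e : V ≃ V') (h : G.Deterministic) :
    (mapEquiv G e).Deterministic := by
  intro p a q q' h1 h2
  have := h _ _ _ _ h1 h2
  exact e.symm.injective this

lemma mapEquiv_essential (G : LabeledGraph V A) (e : V ≃ V') (h : G.Essential) :
    (mapEquiv G e).Essential := by
  intro q
  obtain ⟨⟨a, r, hr⟩, ⟨b, p, hp⟩⟩ := h (e.symm q)
  exact ⟨⟨a, e r, by simpa [mapEquiv] using hr⟩, ⟨b, e p, by simpa [mapEquiv] using hp⟩⟩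

lemma mapEquiv_sync (G : LabeledGraph V A) (e : V ≃ V') (h : G.Synchronizing) :
    (mapEquiv G e).Synchronizing := by
  intro q
  obtain ⟨w, hw⟩ := h (e.symm q)
  refine ⟨w, ?_⟩
  have hmem : q ∈ (mapEquiv G e).transSet Set.univ w := by
    have h0 : e.symm q ∈ G.transSet Set.univ w := by rw [hw]; rfl
    obtain ⟨p, -, hwalk⟩ := h0
    exact ⟨e p, trivial, by rw [mapEquiv_walk]; simpa using hwalk⟩
  ext q'
  simp only [transSet, Set.mem_setOf_eq, Set.mem_singleton_iff]
  constructor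
  · rintro ⟨p, -, hwalk⟩
    rw [mapEquiv_walk] at hwalk
    have h1 : e.symm q' ∈ G.transSet Set.univ w := ⟨e.symm p, trivial, hwalk⟩
    rw [hw] at h1
    simp only [Set.mem_singleton_iff] at h1
    calc q' = e (e.symm q') := by simp
    _ = e (e.symm q) := by rw [h1]
    _ = q := by simp
  · rintro rfl
    exact hmem

lemma mapEquiv_shift (G : LabeledGraph V A) (e : V ≃ V') :
    (mapEquiv G e).shift = G.shift := by
  ext x
  constructor
  · rintro ⟨v, hv⟩
    exact ⟨fun j => e.symm (v j), hv⟩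
  · rintro ⟨v, hv⟩
    exact ⟨fun j => e (v j), fun j => by simpa [mapEquiv] using hv j⟩

end StmtAux5
namespace StmtAux6
open LabeledGraph StmtAux StmtAux2 StmtAux3 StmtAux4 StmtAux5
variable {A V : Type}

lemma forward (H : LabeledGraph V A)
    (hess : H.Essential) (hsync : H.Synchronizing) :
    ∀ u ∈ lang H.shift, ∃ w, IntrinsicallySync H.shift w ∧ u ∈ followerX H.shift w := by
  intro u hu
  obtain ⟨p, q, hwalk⟩ := walk_of_lang hu
  obtain ⟨w, hw⟩ := hsync p
  have hp : ∃ T, H.Walk T w p := by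
    have : p ∈ H.transSet Set.univ w := by rw [hw]; rfl
    obtain ⟨T, -, h⟩ := this; exact ⟨T, h⟩
  have hend : ∀ T r, H.Walk T w r → r = p := by
    intro T r h
    have : r ∈ H.transSet Set.univ w := ⟨T, trivial, h⟩
    rw [hw] at this; exact this
  obtain ⟨T, hT⟩ := hp
  refine ⟨w, ⟨lang_of_walk_essential hess hT, ?_⟩, ?_⟩
  · intro u₁ v₁ h1 h2
    obtain ⟨p1, q1, hw1⟩ := walk_of_lang h1
    obtain ⟨m1, hw1a, hw1b⟩ := walk_append_decomp hw1
    obtain ⟨p2, q2, hw2⟩ := walk_of_lang h2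
    obtain ⟨m2, hw2a, hw2b⟩ := walk_append_decomp hw2
    have h3 : H.Walk q1 v₁ q2 := by
      have e : q1 = m2 := (hend _ _ hw1b).trans (hend _ _ hw2a).symm
      rw [e]; exact hw2b
    exact lang_of_walk_essential hess (walk_append hw1a (walk_append hw1b h3))
  · exact lang_of_walk_essential hess (walk_append hT hwalk)

end StmtAux6


/-- A sofic shift `X ⊆ Σ^ℤ` has a synchronizing deterministic presentation if
and only if for every word `u ∈ B(X)` there exists an intrinsically
synchronizing word `w` for `X` such that `u ∈ F_X(w)`. -/
theorem stmt1 {A : Type} [Fintype A] (X : Set (ℤ → A))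
    (hsofic : ∃ (n : ℕ) (G : LabeledGraph (Fin n) A), G.shift = X) :
    (∃ (n : ℕ) (H : LabeledGraph (Fin n) A),
        H.Deterministic ∧ H.Essential ∧ H.Synchronizing ∧ H.shift = X) ↔
      ∀ u ∈ lang X, ∃ w, IntrinsicallySync X w ∧ u ∈ followerX X w := by
  classical
  constructor
  · rintro ⟨m, H, hdet, hess, hsync, rfl⟩
    exact StmtAux6.forward H hess hsync
  · intro hR
    obtain ⟨n, G, rfl⟩ := hsofic
    haveI : Fintype (StmtAux5.VH G) := StmtAux5.VH.instFintype G
    exact ⟨Fintype.card (StmtAux5.VH G),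
      StmtAux5.mapEquiv (StmtAux5.HG G) (Fintype.equivFin (StmtAux5.VH G)),
      StmtAux5.mapEquiv_det _ _ (StmtAux5.HG_det G),
      StmtAux5.mapEquiv_essential _ _ (StmtAux5.HG_essential G hR),
      StmtAux5.mapEquiv_sync _ _ (StmtAux5.HG_sync G hR),
      by rw [StmtAux5.mapEquiv_shift, StmtAux5.HG_shift G hR]⟩
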